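/- Fix real parameters α, β, γ_r, γ_i, c, d, q, ρ and a > 0, and let Λ̂(k) be the associated symbol matrix. For every δ ∈ (0,1) there exist constants c̃₁ > 0 and c̃₂ > 0 such that for all k ∈ ℝ with |k| ≥ δ and all V ∈ ℂ³, Re ⟨V, Λ̂(k) V⟩ ≤ c̃₁ |k| |V|² - c̃₂ k² |V|², where ⟨·,·⟩ is the standard Hermitian inner product on ℂ³ and |V| the associated norm. -/

import Mathlib

/-- The Fourier symbol `Λ̂(k)` of the linearization of the modulation system about the wave
train, after the change of variables `ψ = √(1-∂ₓ²) v`. -/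
noncomputable def symbolMatrix (α β γr γi c d a q ρ : ℝ) (k : ℝ) : Matrix (Fin 3) (Fin 3) ℂ :=
  !![-(k : ℂ) ^ 2 - 2 * (Real.exp (2 * ρ) : ℂ) - 2 * Complex.I * (α : ℂ) * (q : ℂ) * (k : ℂ),
      (-(Complex.I * (α : ℂ) * (k : ℂ)) - 2 * (q : ℂ)) * (Real.sqrt (1 + k ^ 2) : ℂ),
      (γr : ℂ);
    (-(Complex.I * (α : ℂ) * (k : ℂ) ^ 3)
        - 2 * Complex.I * (β : ℂ) * (Real.exp (2 * ρ) : ℂ) * (k : ℂ)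
        - 2 * (q : ℂ) * (k : ℂ) ^ 2) / (Real.sqrt (1 + k ^ 2) : ℂ),
      -(k : ℂ) ^ 2 - 2 * Complex.I * (α : ℂ) * (q : ℂ) * (k : ℂ),
      Complex.I * (γi : ℂ) * (k : ℂ) / (Real.sqrt (1 + k ^ 2) : ℂ);
    2 * Complex.I * (d : ℂ) * (Real.exp (2 * ρ) : ℂ) * (k : ℂ),
      0,
      -(a : ℂ) * (k : ℂ) ^ 2 + Complex.I * (c : ℂ) * (k : ℂ)]

private lemma cross_bound (z M : ℂ) (S B : ℝ) (hz : ‖z‖ ≤ S) (hM : ‖M‖ ≤ B) :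
    (z * M).re ≤ S * B := by
  calc (z * M).re ≤ ‖z * M‖ := Complex.re_le_norm _
    _ = ‖z‖ * ‖M‖ := norm_mul _ _
    _ ≤ S * B := mul_le_mul hz hM (norm_nonneg _) ((norm_nonneg z).trans hz)

private lemma mul_le_sum3 (x y z : ℝ) (hx : 0 ≤ x) (hy : 0 ≤ y) (hz : 0 ≤ z) :
    x * y ≤ x^2 + y^2 + z^2 := by
  nlinarith [sq_nonneg (x - y), sq_nonneg z]

private lemma abs_bound1 (q δ k s : ℝ) (hδ0 : 0 < δ) (hk : δ ≤ |k|) (hs0 : 0 < s)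
    (hs1 : 1 ≤ s) (hks : |k| ≤ s) :
    |(-2*q*(1+2*k^2))/s| ≤ (2 * |q|/δ + 4 * |q|) * |k| := by
  rw [abs_div, abs_of_pos hs0, div_le_iff₀ hs0]
  have h1a : |(-2*q*(1+2*k^2))| = 2 * |q| * (1+2*k^2) := by
    rw [show (-2*q*(1+2*k^2)) = (-2) * (q * (1+2*k^2)) by ring, abs_mul, abs_mul,
      abs_of_pos (by positivity : (0:ℝ) < 1+2*k^2)]
    norm_num
    ring
  rw [h1a]
  have hδks : δ ≤ |k| * s := by nlinarith [abs_nonneg k, mul_le_mul_of_nonneg_left hs1 (abs_nonneg k)]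
  have hkss : k^2 ≤ |k| * s := by nlinarith [sq_abs k, abs_nonneg k]
  have h2 : 2 * |q|/δ * δ ≤ 2 * |q|/δ * (|k| * s) :=
    mul_le_mul_of_nonneg_left hδks (by positivity)
  have h3 : 4 * |q| * k^2 ≤ 4 * |q| * (|k| * s) :=
    mul_le_mul_of_nonneg_left hkss (by positivity)
  have h4 : 2 * |q|/δ * δ = 2 * |q| := by field_simp
  nlinarith

private lemma abs_bound2 (α β e δ k s : ℝ) (hδ0 : 0 < δ) (hδ1 : δ < 1) (hk : δ ≤ |k|)
    (hs0 : 0 < s) (hs1 : 1 ≤ s) (he0 : 0 < e) :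
    |(2*β*e - α)*k/s| ≤ ((|α| + 2 * |β| * e)/δ) * |k| := by
  have e1 : |(2*β*e - α)*k/s| = |2*β*e - α| * |k| / s := by
    rw [abs_div, abs_mul, abs_of_pos hs0]
  have e3 : |2*β*e| = 2 * |β| * e := by
    rw [show (2*β*e) = 2 * (β * e) by ring, abs_mul, abs_mul, abs_of_pos he0]
    norm_num
    ring
  have e2 : |2*β*e - α| ≤ |α| + 2 * |β| * e := by
    have := sub_eq_add_neg (2*β*e) α ▸ abs_add_le (2*β*e) (-α)
    rw [abs_neg, e3] at this
    linarith
  rw [e1, div_le_iff₀ hs0]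
  have e6 : (|α| + 2 * |β| * e) ≤ (|α| + 2 * |β| * e)/δ := by
    rw [le_div_iff₀ hδ0]
    nlinarith [abs_nonneg α, mul_nonneg (abs_nonneg β) he0.le]
  have e4 : |2*β*e - α| * |k| ≤ (|α| + 2 * |β| * e) * |k| :=
    mul_le_mul_of_nonneg_right e2 (abs_nonneg k)
  have e5 : (|α| + 2 * |β| * e) * |k| ≤ ((|α| + 2 * |β| * e)/δ) * |k| * s := by
    have e7 := mul_le_mul e6 hs1 one_pos.le (by positivity : (0:ℝ) ≤ (|α| + 2 * |β| * e)/δ)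
    rw [mul_one] at e7
    nlinarith [abs_nonneg k, mul_le_mul_of_nonneg_right e7 (abs_nonneg k)]
  linarith

private lemma abs_bound3 (γr d e δ k : ℝ) (hδ0 : 0 < δ) (hk : δ ≤ |k|) (he0 : 0 < e) :
    |γr| + |(-2*d*e*k)| ≤ (|γr|/δ + 2 * |d| * e) * |k| := by
  have h1 : |γr| ≤ |γr|/δ * |k| := by
    rw [div_mul_eq_mul_div, le_div_iff₀ hδ0]
    exact mul_le_mul_of_nonneg_left hk (abs_nonneg γr)
  have h2 : |(-2*d*e*k)| = 2 * |d| * e * |k| := by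
    rw [show (-2*d*e*k) = (-2) * (d * (e * k)) by ring, abs_mul, abs_mul, abs_mul,
      abs_of_pos he0]
    norm_num
    ring
  nlinarith
private lemma abs_bound4 (γi δ k s : ℝ) (hδ0 : 0 < δ) (hk : δ ≤ |k|) (hs0 : 0 < s)
    (hks : |k| ≤ s) :
    |γi*k/s| ≤ (|γi|/δ) * |k| := by
  have h1 : |γi*k/s| = |γi| * |k| / s := by
    rw [abs_div, abs_mul, abs_of_pos hs0]
  have h2 : |γi| * |k| / s ≤ |γi| := by
    rw [div_le_iff₀ hs0]
    nlinarith [abs_nonneg γi, abs_nonneg k]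
  have h3 : |γi| ≤ |γi|/δ * |k| := by
    rw [div_mul_eq_mul_div, le_div_iff₀ hδ0]
    exact mul_le_mul_of_nonneg_left hk (abs_nonneg γi)
  linarith [h1 ▸ h2]

private lemma diag_le (m b r k x : ℝ) (hx : 0 ≤ x) (hm0 : 0 ≤ m) (hm : m ≤ b) (hr : 0 ≤ r) :
    (-(b*k^2) - r)*x ≤ -(m*(k^2*x)) := by
  nlinarith [mul_nonneg (mul_nonneg (sub_nonneg.2 hm) (sq_nonneg k)) hx, mul_nonneg hr hx]

set_option maxHeartbeats 1000000 in
/-- High-frequency parabolic estimate for the symbol `Λ̂(k)`: for every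
`δ ∈ (0,1)` there are `c̃₁, c̃₂ > 0` such that for all `|k| ≥ δ` and `V ∈ ℂ³`,
`Re ⟨V, Λ̂(k)V⟩ ≤ c̃₁|k||V|² - c̃₂k²|V|²`. -/
theorem symbol_high_frequency_estimate (α β γr γi c d a q ρ : ℝ) (ha : 0 < a)
    (δ : ℝ) (hδ : δ ∈ Set.Ioo (0:ℝ) 1) :
    ∃ c₁ c₂ : ℝ, 0 < c₁ ∧ 0 < c₂ ∧
      ∀ k : ℝ, δ ≤ |k| → ∀ V : Fin 3 → ℂ,
        (∑ i : Fin 3,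
            (starRingEnd ℂ) (V i) * (symbolMatrix α β γr γi c d a q ρ k).mulVec V i).re ≤
          c₁ * |k| * (∑ i : Fin 3, ‖V i‖ ^ 2) - c₂ * k ^ 2 * (∑ i : Fin 3, ‖V i‖ ^ 2) := by
  obtain ⟨hδ0, hδ1⟩ := hδ
  set e : ℝ := Real.exp (2 * ρ) with he
  have he0 : 0 < e := Real.exp_pos _
  set C : ℝ := (2 * |q|/δ + 4 * |q|) + (|α| + 2 * |β| * e)/δ + (|γr|/δ + 2 * |d| * e)
      + |γi|/δ with hC
  have hC0 : 0 ≤ C := by positivity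
  refine ⟨3*C + 1, min 1 a, by positivity, lt_min one_pos ha, ?_⟩
  intro k hk V
  set s : ℝ := Real.sqrt (1 + k ^ 2) with hs
  have hs0 : 0 < s := Real.sqrt_pos.2 (by positivity)
  have hs2 : s ^ 2 = 1 + k ^ 2 := Real.sq_sqrt (by positivity)
  have hs1 : 1 ≤ s := by nlinarith [sq_nonneg k]
  have hks : |k| ≤ s := by nlinarith [abs_nonneg k, sq_abs k]
  have hsne : (s : ℂ) ≠ 0 := by exact_mod_cast hs0.ne'
  have hs2c : (s : ℂ) ^ 2 = 1 + (k : ℂ) ^ 2 := by exact_mod_cast congrArg (fun x : ℝ => (x:ℂ)) hs2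
  -- notation
  set v0 := V 0 with hv0; set v1 := V 1 with hv1; set v2 := V 2 with hv2
  set z01 := (starRingEnd ℂ) v0 * v1 with hz01def
  set z02 := (starRingEnd ℂ) v0 * v2 with hz02def
  set z12 := (starRingEnd ℂ) v1 * v2 with hz12def
  set M01 : ℂ := ((-2*q*(1+2*k^2)/s : ℝ) : ℂ) + Complex.I * (((2*β*e - α)*k/s : ℝ) : ℂ)
    with hM01def
  set M02 : ℂ := ((γr : ℝ) : ℂ) + Complex.I * ((-2*d*e*k : ℝ) : ℂ) with hM02def
  set M12 : ℂ := Complex.I * ((γi*k/s : ℝ) : ℂ) with hM12def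
  set S : ℝ := ‖v0‖^2 + ‖v1‖^2 + ‖v2‖^2 with hSdef
  have hS : (∑ i : Fin 3, ‖V i‖ ^ 2) = S := by
    rw [Fin.sum_univ_three]
  have hS0 : 0 ≤ S := by positivity
  -- the symmetrized off-diagonal entries
  have hM01 : ((-(Complex.I * (α : ℂ) * (k : ℂ)) - 2 * (q : ℂ)) * (s : ℂ))
      + (starRingEnd ℂ) ((-(Complex.I * (α : ℂ) * (k : ℂ) ^ 3)
          - 2 * Complex.I * (β : ℂ) * (e : ℂ) * (k : ℂ)
          - 2 * (q : ℂ) * (k : ℂ) ^ 2) / (s : ℂ)) = M01 := by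
    rw [hM01def]
    simp only [map_div₀, map_sub, map_mul, map_pow, map_ofNat, Complex.conj_I,
      Complex.conj_ofReal, map_neg]
    push_cast
    field_simp
    ring_nf
    linear_combination (-(Complex.I*(α:ℂ)*k) - 2*(q:ℂ)) * hs2c
  have hM02 : ((γr : ℝ) : ℂ)
      + (starRingEnd ℂ) (2 * Complex.I * (d : ℂ) * (e : ℂ) * (k : ℂ)) = M02 := by
    rw [hM02def]
    simp only [map_mul, map_ofNat, Complex.conj_I, Complex.conj_ofReal]
    push_cast
    ring
  have hM12 : Complex.I * (γi : ℂ) * (k : ℂ) / (s : ℂ) + (starRingEnd ℂ) (0 : ℂ) = M12 := by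
    rw [hM12def, map_zero]
    push_cast
    field_simp
    ring
  -- expansion of the quadratic form
  obtain ⟨W, hexp⟩ : ∃ W : ℂ, (∑ i : Fin 3,
      (starRingEnd ℂ) (V i) * (symbolMatrix α β γr γi c d a q ρ k).mulVec V i)
      = ((-k^2 - 2*e : ℝ) : ℂ) * ((starRingEnd ℂ) v0 * v0)
        + ((-k^2 : ℝ) : ℂ) * ((starRingEnd ℂ) v1 * v1)
        + ((-(a*k^2) : ℝ) : ℂ) * ((starRingEnd ℂ) v2 * v2)
        + z01 * (((-(Complex.I * (α : ℂ) * (k : ℂ)) - 2 * (q : ℂ)) * (s : ℂ))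
            + (starRingEnd ℂ) ((-(Complex.I * (α : ℂ) * (k : ℂ) ^ 3)
                - 2 * Complex.I * (β : ℂ) * (e : ℂ) * (k : ℂ)
                - 2 * (q : ℂ) * (k : ℂ) ^ 2) / (s : ℂ)))
        + z02 * (((γr : ℝ) : ℂ)
            + (starRingEnd ℂ) (2 * Complex.I * (d : ℂ) * (e : ℂ) * (k : ℂ)))
        + z12 * (Complex.I * (γi : ℂ) * (k : ℂ) / (s : ℂ) + (starRingEnd ℂ) (0 : ℂ))
        + (W - (starRingEnd ℂ) W) := by
    refine ⟨(starRingEnd ℂ) z01 * ((-(Complex.I * (α : ℂ) * (k : ℂ) ^ 3)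
          - 2 * Complex.I * (β : ℂ) * (e : ℂ) * (k : ℂ)
          - 2 * (q : ℂ) * (k : ℂ) ^ 2) / (s : ℂ))
        + (starRingEnd ℂ) z02 * (2 * Complex.I * (d : ℂ) * (e : ℂ) * (k : ℂ))
        + (-Complex.I * (α : ℂ) * (q : ℂ) * (k : ℂ)) * ((starRingEnd ℂ) v0 * v0)
        + (-Complex.I * (α : ℂ) * (q : ℂ) * (k : ℂ)) * ((starRingEnd ℂ) v1 * v1)
        + (Complex.I * (c : ℂ) * (k : ℂ) / 2) * ((starRingEnd ℂ) v2 * v2), ?_⟩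
    rw [hz01def, hz02def, hz12def, hv0, hv1, hv2]
    simp [symbolMatrix, Matrix.mulVec, dotProduct, Fin.sum_univ_three,
      ← he, ← hs, map_add, map_mul, map_sub, map_neg, map_div₀, map_pow, map_ofNat,
      Complex.conj_I, Complex.conj_ofReal, Complex.conj_conj, -Complex.ofReal_exp]
    push_cast
    ring
  rw [hM01, hM02, hM12] at hexp
  have hre : (∑ i : Fin 3,
      (starRingEnd ℂ) (V i) * (symbolMatrix α β γr γi c d a q ρ k).mulVec V i).re
      = (-k^2 - 2*e) * ‖v0‖^2 + (-k^2) * ‖v1‖^2 + (-(a*k^2)) * ‖v2‖^2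
        + (z01 * M01).re + (z02 * M02).re + (z12 * M12).re := by
    rw [hexp]
    simp only [Complex.conj_mul', Complex.add_re, Complex.sub_re, Complex.conj_re,
      ← Complex.ofReal_pow, ← Complex.ofReal_mul, Complex.ofReal_re]
    ring
  clear hexp hM01 hM02 hM12
  -- norm bounds on the z's
  have hzn : ∀ x y : ℂ, ‖(starRingEnd ℂ) x * y‖ = ‖x‖ * ‖y‖ := by
    intro x y; rw [norm_mul, RCLike.norm_conj]
  have hz01n : ‖z01‖ ≤ S := by
    rw [hz01def, hzn, hSdef]
    exact mul_le_sum3 _ _ ‖v2‖ (norm_nonneg _) (norm_nonneg _) (norm_nonneg _)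
  have hz02n : ‖z02‖ ≤ S := by
    rw [hz02def, hzn, hSdef]
    have := mul_le_sum3 ‖v0‖ ‖v2‖ ‖v1‖ (norm_nonneg _) (norm_nonneg _) (norm_nonneg _)
    linarith
  have hz12n : ‖z12‖ ≤ S := by
    rw [hz12def, hzn, hSdef]
    have := mul_le_sum3 ‖v1‖ ‖v2‖ ‖v0‖ (norm_nonneg _) (norm_nonneg _) (norm_nonneg _)
    linarith
  -- norm bounds on the M's
  have hIr : ∀ r : ℝ, ‖Complex.I * (r : ℂ)‖ = |r| := by
    intro r; rw [norm_mul, Complex.norm_I, Complex.norm_real, one_mul, Real.norm_eq_abs]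
  have habsk : (0:ℝ) ≤ |k| := abs_nonneg k
  have hM01n : ‖M01‖ ≤ C * |k| := by
    rw [hM01def]
    refine (norm_add_le _ _).trans ?_
    rw [Complex.norm_real, Real.norm_eq_abs, hIr]
    have h1 := abs_bound1 q δ k s hδ0 hk hs0 hs1 hks
    have h2 := abs_bound2 α β e δ k s hδ0 hδ1 hk hs0 hs1 he0
    have h3 : (2 * |q|/δ + 4 * |q|) * |k| + ((|α| + 2 * |β| * e)/δ) * |k| ≤ C * |k| := by
      rw [hC]
      have h9 : (0:ℝ) ≤ ((|γr|/δ + 2 * |d| * e) + |γi|/δ) * |k| := by positivity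
      linarith [h9.trans_eq (by ring :
        ((|γr|/δ + 2 * |d| * e) + |γi|/δ) * |k|
        = ((2 * |q|/δ + 4 * |q|) + (|α| + 2 * |β| * e)/δ + (|γr|/δ + 2 * |d| * e) + |γi|/δ) * |k|
          - (2 * |q|/δ + 4 * |q|) * |k| - ((|α| + 2 * |β| * e)/δ) * |k|)]
    linarith
  have hM02n : ‖M02‖ ≤ C * |k| := by
    rw [hM02def]
    refine (norm_add_le _ _).trans ?_
    rw [Complex.norm_real, Real.norm_eq_abs, hIr]
    have h1 := abs_bound3 γr d e δ k hδ0 hk he0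
    have h3 : (|γr|/δ + 2 * |d| * e) * |k| ≤ C * |k| := by
      rw [hC]
      have h9 : (0:ℝ) ≤ ((2 * |q|/δ + 4 * |q|) + (|α| + 2 * |β| * e)/δ + |γi|/δ) * |k| := by
        positivity
      linarith [h9.trans_eq (by ring :
        ((2 * |q|/δ + 4 * |q|) + (|α| + 2 * |β| * e)/δ + |γi|/δ) * |k|
        = ((2 * |q|/δ + 4 * |q|) + (|α| + 2 * |β| * e)/δ + (|γr|/δ + 2 * |d| * e) + |γi|/δ) * |k|
          - (|γr|/δ + 2 * |d| * e) * |k|)]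
    exact le_trans h1 h3
  have hM12n : ‖M12‖ ≤ C * |k| := by
    rw [hM12def, hIr]
    have h1 := abs_bound4 γi δ k s hδ0 hk hs0 hks
    have h3 : (|γi|/δ) * |k| ≤ C * |k| := by
      rw [hC]
      have h9 : (0:ℝ) ≤ ((2 * |q|/δ + 4 * |q|) + (|α| + 2 * |β| * e)/δ
          + (|γr|/δ + 2 * |d| * e)) * |k| := by positivity
      linarith [h9.trans_eq (by ring :
        ((2 * |q|/δ + 4 * |q|) + (|α| + 2 * |β| * e)/δ + (|γr|/δ + 2 * |d| * e)) * |k|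
        = ((2 * |q|/δ + 4 * |q|) + (|α| + 2 * |β| * e)/δ + (|γr|/δ + 2 * |d| * e) + |γi|/δ) * |k|
          - (|γi|/δ) * |k|)]
    linarith
  -- cross terms
  have hcr1 : (z01 * M01).re ≤ C * (|k| * S) :=
    (cross_bound z01 M01 S (C * |k|) hz01n hM01n).trans_eq (by ring)
  have hcr2 : (z02 * M02).re ≤ C * (|k| * S) :=
    (cross_bound z02 M02 S (C * |k|) hz02n hM02n).trans_eq (by ring)
  have hcr3 : (z12 * M12).re ≤ C * (|k| * S) :=
    (cross_bound z12 M12 S (C * |k|) hz12n hM12n).trans_eq (by ring)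
  clear hz01n hz02n hz12n hM01n hM02n hM12n hzn hIr
  -- diagonal terms
  have hm0 : 0 ≤ min 1 a := le_min zero_le_one ha.le
  have hd0 : (-k^2 - 2*e) * ‖v0‖^2 ≤ -(min 1 a * (k^2 * ‖v0‖^2)) := by
    have := diag_le (min 1 a) 1 (2*e) k (‖v0‖^2) (sq_nonneg _) hm0 (min_le_left _ _)
      (by positivity)
    linarith [this]
  have hd1 : (-k^2) * ‖v1‖^2 ≤ -(min 1 a * (k^2 * ‖v1‖^2)) := by
    have := diag_le (min 1 a) 1 0 k (‖v1‖^2) (sq_nonneg _) hm0 (min_le_left _ _) le_rfl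
    linarith [this]
  have hd2 : (-(a*k^2)) * ‖v2‖^2 ≤ -(min 1 a * (k^2 * ‖v2‖^2)) := by
    have := diag_le (min 1 a) a 0 k (‖v2‖^2) (sq_nonneg _) hm0 (min_le_right _ _) le_rfl
    linarith [this]
  rw [hre, hS]
  have hkS : 0 ≤ |k| * S := by positivity
  have hfin : (3*C + 1) * |k| * S - (min 1 a) * k^2 * S
      = 3*(C*(|k| * S)) + |k| * S
        - ((min 1 a * (k^2 * ‖v0‖^2)) + (min 1 a * (k^2 * ‖v1‖^2))
          + (min 1 a * (k^2 * ‖v2‖^2))) := by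
    rw [hSdef]; ring
  linarith
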